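/- For any problems f and g, the maximum with respect to continuous Weihrauch reducibility ≤*_W of the set {f' ∘ g' : f' ≤*_W f and g' ≤*_W g} exists, and it is continuously Weihrauch equivalent to the compositional product f * g. -/

import Mathlib

/-- Baire space. -/
abbrev Baire := ℕ → ℕ

/-- A problem: a partial multivalued function on Baire space, given as the
solution-set map; the domain is the set of instances with nonempty solution set. -/
def Problem := Baire → Set Baire

/-- Domain of a problem. -/
def Dom (f : Problem) : Set Baire := {x | (f x).Nonempty}

/-- A standard computable pairing of two sequences (interleaving). -/
def pair (x y : Baire) : Baire := fun n => if n % 2 = 0 then x (n / 2) else y (n / 2)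

/-- Initial segment of length `m` of a sequence. -/
def initSeg (x : Baire) (m : ℕ) : List ℕ := (List.range m).map x

/-- `F` is (the restriction to `D` of) a partial computable function on Baire space:
there is a computable monotone oracle functional computing `F x` from prefixes of `x`,
correctly and consistently, for every `x ∈ D`. -/
def ComputableOn (F : Baire → Baire) (D : Set Baire) : Prop :=
  ∃ φ : List ℕ → ℕ → Option ℕ, Computable₂ φ ∧
    ∀ x ∈ D, ∀ n : ℕ,
      (∃ m, φ (initSeg x m) n = some (F x n)) ∧
      (∀ m v, φ (initSeg x m) n = some v → v = F x n)

/-- Weihrauch reducibility `f ≤_W g`, with the partial computable forward functional `k`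
defined on `Dom f` and the partial computable backward functional `h` defined on all
pairs `⟨x, y⟩` with `x ∈ Dom f` and `y` a `g`-solution of `k x`. -/
def WRed (f g : Problem) : Prop :=
  ∃ h k : Baire → Baire,
    ComputableOn k (Dom f) ∧
    ComputableOn h {p | ∃ x ∈ Dom f, ∃ y ∈ g (k x), p = pair x y} ∧
    ∀ x ∈ Dom f, k x ∈ Dom g ∧ ∀ y ∈ g (k x), h (pair x y) ∈ f x

/-- Weihrauch equivalence. -/
def WEquiv (f g : Problem) : Prop := WRed f g ∧ WRed g f

/-- Continuous Weihrauch reducibility `f ≤*_W g`: as `WRed` but the functionals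
need only be partial continuous (continuous on their domains, Baire space carrying
the product topology). -/
def ContWRed (f g : Problem) : Prop :=
  ∃ h k : Baire → Baire,
    ContinuousOn k (Dom f) ∧
    ContinuousOn h {p | ∃ x ∈ Dom f, ∃ y ∈ g (k x), p = pair x y} ∧
    ∀ x ∈ Dom f, k x ∈ Dom g ∧ ∀ y ∈ g (k x), h (pair x y) ∈ f x

/-- Continuous Weihrauch equivalence. -/
def ContWEquiv (f g : Problem) : Prop := ContWRed f g ∧ ContWRed g f

/-- Composition of problems: `dom (f ∘ g) = {x ∈ dom g : g x ⊆ dom f}` and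
`(f ∘ g) x = {z : ∃ y ∈ g x, z ∈ f y}`. -/
def pcomp (f g : Problem) : Problem :=
  fun x => {z | g x ⊆ Dom f ∧ ∃ y ∈ g x, z ∈ f y}

/-- The identity problem. -/
def idp : Problem := fun x => {x}

/-- `p` is (a representative of) the compositional product `f * g`: the maximum,
with respect to `≤_W`, of `{f' ∘ g' : f' ≤_W f, g' ≤_W g}`. -/
def IsCompProd (f g p : Problem) : Prop :=
  (∃ f' g', WRed f' f ∧ WRed g' g ∧ WEquiv p (pcomp f' g')) ∧
  (∀ f' g', WRed f' f → WRed g' g → WRed (pcomp f' g') p)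

/-- `IsIter f n p` : `p` is (a representative of) `f^[n]`, the compositional product of
`n` copies of `f`, with `f^[0] := id`. -/
def IsIter (f : Problem) : ℕ → Problem → Prop
  | 0, p => p = idp
  | n + 1, p => ∃ q, IsIter f n q ∧ IsCompProd f q p

/-- The constant sequence with value `n`. -/
def cseq (n : ℕ) : Baire := fun _ => n

/-- The limited principle of omniscience. -/
def LPO : Problem := fun x =>
  {y | ((∃ n, x n = 0) ∧ y = cseq 0) ∨ ((∀ n, x n ≠ 0) ∧ y = cseq 1)}

/-- The lesser limited principle of omniscience. -/
def LLPO : Problem := fun x =>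
  {y | (∀ i j, x i ≠ 0 → x j ≠ 0 → i = j) ∧
       ((y = cseq 0 ∧ ∀ i, Even i → x i = 0) ∨
        (y = cseq 1 ∧ ∀ i, Odd i → x i = 0))}

/-- Turing reducibility between points of Baire space: `x` is computable from
oracle `y`. -/
def TuringLE (x y : Baire) : Prop :=
  ∃ φ : List ℕ → ℕ → Option ℕ, Computable₂ φ ∧
    ∀ n : ℕ, (∃ m, φ (initSeg y m) n = some (x n)) ∧
      (∀ m v, φ (initSeg y m) n = some v → v = x n)

/-- Mutual Turing reducibility: `x` and `y` have the same Turing degree. -/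
def TuringEquiv (x y : Baire) : Prop := TuringLE x y ∧ TuringLE y x

/-- Strict Turing reducibility. -/
def TuringLT (x y : Baire) : Prop := TuringLE x y ∧ ¬ TuringLE y x

/-- The problem `w_a`, for `a` a representative of a (non-zero) Turing degree. -/
def w (a : Baire) : Problem := fun x =>
  {y | (Computable x ∧ ¬ Computable y) ∨ (¬ Computable x ∧ TuringEquiv y a)}

/-- `k`-weak continuity of a problem. -/
def WeaklyContinuous (k : ℕ) (f : Problem) : Prop :=
  ∀ x ∈ Dom f, ∀ y : ℕ → Baire, (∀ n, y n ∈ Dom f) →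
    Filter.Tendsto y Filter.atTop (nhds x) →
    ∃ u ∈ f x, ∀ l < k, ∀ m : ℕ, ∃ n ≥ m,
      ∃ v ∈ f (y (n * k + l)), initSeg u m = initSeg v m

/-- Product of two problems. -/
def prodP (f g : Problem) : Problem := fun z =>
  {w | ∃ x y u v, z = pair x y ∧ w = pair u v ∧ u ∈ f x ∧ v ∈ g y}

/-- `powP f n` : the product of `n` copies of `f` (for `n ≥ 1`). -/
def powP (f : Problem) : ℕ → Problem
  | 0 => idp
  | 1 => f
  | n + 2 => prodP f (powP f (n + 1))

/-- A problem `f` is `k`-continuous: it has a realizer `r` (defined on a domain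
`D ⊇ Dom f`) together with a partition of `D` into at most `k` pieces (given by a
coloring `c`) such that `r` is continuous on each piece. -/
def kContinuous (k : ℕ) (f : Problem) : Prop :=
  ∃ (D : Set Baire) (r : Baire → Baire) (c : Baire → Fin k),
    Dom f ⊆ D ∧ (∀ x ∈ Dom f, r x ∈ f x) ∧
    ∀ i : Fin k, ContinuousOn r {x ∈ D | c x = i}


/-! ### Auxiliary material for the proof -/

namespace CCPAux

open scoped Classical

/-! #### Basic facts about initial segments and pairing -/

lemma initSeg_length (x : Baire) (m : ℕ) : (initSeg x m).length = m := by simp [initSeg]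

lemma initSeg_getD (x : Baire) {m c : ℕ} (h : c < m) : (initSeg x m).getD c 0 = x c := by
  simp [initSeg, List.getD_eq_getElem?_getD, List.getElem?_map, List.getElem?_range h]

lemma initSeg_get?_of_lt {x : Baire} {m c : ℕ} (h : c < m) :
    (initSeg x m)[c]? = some (x c) := by
  simp [initSeg, List.getElem?_map, List.getElem?_range h]

lemma initSeg_get?_eq {x : Baire} {m c v : ℕ} (h : (initSeg x m)[c]? = some v) : v = x c := by
  by_cases hc : c < m
  · rw [initSeg_get?_of_lt hc] at h; exact (Option.some_inj.mp h).symm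
  · rw [List.getElem?_eq_none (by simpa [initSeg_length] using Nat.le_of_not_lt hc)] at h; cases h

lemma initSeg_eq_iff {x y : Baire} {m : ℕ} :
    initSeg x m = initSeg y m ↔ ∀ i < m, x i = y i := by
  constructor
  · intro h i hi
    rw [← initSeg_getD x hi, ← initSeg_getD y hi, h]
  · intro h
    unfold initSeg
    apply List.map_congr_left
    intro i hi
    exact h i (List.mem_range.mp hi)

lemma initSeg_mono {x y : Baire} {m m' : ℕ} (h : m ≤ m') (e : initSeg x m' = initSeg y m') :
    initSeg x m = initSeg y m :=
  initSeg_eq_iff.2 fun i hi => initSeg_eq_iff.1 e i (lt_of_lt_of_le hi h)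

def evens (z : Baire) : Baire := fun n => z (2 * n)
def odds (z : Baire) : Baire := fun n => z (2 * n + 1)

lemma evens_pair (a x : Baire) : evens (pair a x) = a := by
  funext n
  simp [evens, pair, Nat.mul_mod_right, Nat.mul_div_cancel_left _ (by norm_num : (0:ℕ) < 2)]

lemma odds_pair (a x : Baire) : odds (pair a x) = x := by
  funext n
  have h1 : (2 * n + 1) % 2 = 1 := by omega
  have h2 : (2 * n + 1) / 2 = n := by omega
  simp [odds, pair, h1, h2]

lemma pair_inj_right {a u v : Baire} (h : pair a u = pair a v) : u = v := by
  have := congrArg odds h; rwa [odds_pair, odds_pair] at this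

lemma pair_even (z y : Baire) (n : ℕ) : pair z y (2 * n) = z n := by
  simp [pair, Nat.mul_mod_right, Nat.mul_div_cancel_left _ (by norm_num : (0:ℕ) < 2)]

lemma initSeg_pair_congr {u u' v v' : Baire} {m : ℕ}
    (hu : initSeg u m = initSeg u' m) (hv : initSeg v m = initSeg v' m) :
    initSeg (pair u v) m = initSeg (pair u' v') m := by
  rw [initSeg_eq_iff] at *
  intro i hi
  have hd : i / 2 < m := lt_of_le_of_lt (Nat.div_le_self i 2) hi
  by_cases h : i % 2 = 0 <;> simp [pair, h, hu _ hd, hv _ hd]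

lemma initSeg_pair_split {x y x' y' : Baire} {t : ℕ}
    (h : initSeg (pair x y) (2 * t) = initSeg (pair x' y') (2 * t)) :
    initSeg x t = initSeg x' t ∧ initSeg y t = initSeg y' t := by
  rw [initSeg_eq_iff] at h
  constructor <;> rw [initSeg_eq_iff] <;> intro i hi
  · have := h (2 * i) (by omega)
    simpa [pair, Nat.mul_mod_right, Nat.mul_div_cancel_left _ (by norm_num : (0:ℕ) < 2)] using this
  · have := h (2 * i + 1) (by omega)
    have h1 : (2 * i + 1) % 2 = 1 := by omega
    have h2 : (2 * i + 1) / 2 = i := by omega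
    simpa [pair, h1, h2] using this

/-! #### Prefix continuity -/

def PrefCont (F : Baire → Baire) (D : Set Baire) : Prop :=
  ∀ x ∈ D, ∀ n : ℕ, ∃ m, ∀ x' ∈ D, initSeg x' m = initSeg x m → F x' n = F x n

lemma continuousOn_of_prefCont {F : Baire → Baire} {D : Set Baire} (h : PrefCont F D) :
    ContinuousOn F D := by
  intro x hx
  rw [continuousWithinAt_pi]
  intro n
  obtain ⟨m, hm⟩ := h x hx n
  have hnhds : {y : Baire | initSeg y m = initSeg x m} ∈ nhdsWithin x D := by
    apply mem_nhdsWithin_of_mem_nhds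
    have hop : IsOpen {y : Baire | initSeg y m = initSeg x m} := by
      have : {y : Baire | initSeg y m = initSeg x m} =
          ⋂ i : Fin m, (fun y : Baire => y i.1) ⁻¹' {x i.1} := by
        ext y
        simp only [Set.mem_setOf_eq, Set.mem_iInter, Set.mem_preimage, Set.mem_singleton_iff,
          initSeg_eq_iff]
        exact ⟨fun h i => h i.1 i.2, fun h i hi => h ⟨i, hi⟩⟩
      rw [this]
      exact isOpen_iInter_of_finite fun i =>
        (continuous_apply i.1).isOpen_preimage _ (isOpen_discrete _)
    exact hop.mem_nhds (by simp)
  have hev : ∀ᶠ y in nhdsWithin x D, F y n = F x n := by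
    filter_upwards [hnhds, self_mem_nhdsWithin] with y h1 h2
    exact hm y h2 h1
  rw [ContinuousWithinAt]
  rw [congrFun (nhds_discrete ℕ) (F x n), Filter.tendsto_pure]
  exact hev

lemma prefCont_of_continuousOn {F : Baire → Baire} {D : Set Baire} (h : ContinuousOn F D) :
    PrefCont F D := by
  intro x hx n
  have hc := continuousWithinAt_pi.1 (h x hx) n
  rw [ContinuousWithinAt, congrFun (nhds_discrete ℕ) (F x n), Filter.tendsto_pure] at hc
  rw [Filter.eventually_iff, mem_nhdsWithin] at hc
  obtain ⟨U, hU, hxU, hsub⟩ := hc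
  obtain ⟨I, u, hIu, hpi⟩ := isOpen_pi_iff.1 hU x hxU
  refine ⟨(I.sup id) + 1, fun x' hx' he => ?_⟩
  have hmem : x' ∈ U := by
    apply hpi
    intro i hi
    have : x' i = x i := initSeg_eq_iff.1 he i (by
      have := Finset.le_sup (f := id) hi
      simp only [id] at this; omega)
    rw [this]
    exact (hIu i hi).2
  exact hsub ⟨hmem, hx'⟩

lemma prefCont_of_computableOn {F : Baire → Baire} {D : Set Baire} (h : ComputableOn F D) :
    PrefCont F D := by
  obtain ⟨φ, _, hφ⟩ := h
  intro x hx n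
  obtain ⟨m, hm⟩ := (hφ x hx n).1
  refine ⟨m, fun x' hx' he => ?_⟩
  exact ((hφ x' hx' n).2 m (F x n) (by rw [he]; exact hm)).symm

lemma contWRed_of_wRed {f g : Problem} (h : WRed f g) : ContWRed f g := by
  obtain ⟨h₁, k₁, hk, hh, hc⟩ := h
  exact ⟨h₁, k₁, continuousOn_of_prefCont (prefCont_of_computableOn hk),
    continuousOn_of_prefCont (prefCont_of_computableOn hh), hc⟩

/-! #### Tables and oracles -/

/-- Table entry for the continuous function `F` on domain `D`. -/
noncomputable def tOpt (F : Baire → Baire) (D : Set Baire) (σ : List ℕ) (n : ℕ) : Option ℕ :=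
  if h : ∃ v, (∀ x ∈ D, initSeg x σ.length = σ → F x n = v) ∧ ∃ x ∈ D, initSeg x σ.length = σ
  then some h.choose else none

lemma tOpt_sound {F : Baire → Baire} {D : Set Baire} {σ : List ℕ} {n v : ℕ} {x : Baire}
    (h : tOpt F D σ n = some v) (hx : x ∈ D) (hpre : initSeg x σ.length = σ) : v = F x n := by
  unfold tOpt at h
  split at h
  · rename_i hex
    have := hex.choose_spec.1 x hx hpre
    simp only [Option.some_inj] at h
    omega
  · cases h

lemma tOpt_some {F : Baire → Baire} {D : Set Baire} (pc : PrefCont F D) {x : Baire}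
    (hx : x ∈ D) (n : ℕ) : ∃ m₀, ∀ m, m₀ ≤ m → tOpt F D (initSeg x m) n = some (F x n) := by
  obtain ⟨m₀, hm₀⟩ := pc x hx n
  refine ⟨m₀, fun m hm => ?_⟩
  have hex : ∃ v, (∀ x' ∈ D, initSeg x' (initSeg x m).length = initSeg x m → F x' n = v) ∧
      ∃ x' ∈ D, initSeg x' (initSeg x m).length = initSeg x m := by
    refine ⟨F x n, fun x' hx' hp => ?_, x, hx, by rw [initSeg_length]⟩
    rw [initSeg_length] at hp
    exact hm₀ x' hx' (initSeg_mono hm hp)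
  rw [tOpt, dif_pos hex]
  have := hex.choose_spec.1 x hx (by rw [initSeg_length])
  rw [← this]

/-- Oracle encoding the tables of a family of functions. -/
noncomputable def oracleA (Fs : ℕ → Baire → Baire) (Ds : ℕ → Set Baire) : Baire := fun c =>
  Encodable.encode ((Encodable.decode (α := ℕ × List ℕ × ℕ) c).bind
    (fun q => tOpt (Fs q.1) (Ds q.1) q.2.1 q.2.2))

def takeL (l : ℕ) (ξ : List ℕ) : List ℕ := (List.range l).map (fun i => ξ.getD i 0)

lemma takeL_initSeg {u : Baire} {l t : ℕ} (h : l ≤ t) : takeL l (initSeg u t) = initSeg u l := by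
  unfold takeL initSeg
  apply List.map_congr_left
  intro i hi
  have : i < l := List.mem_range.mp hi
  exact initSeg_getD u (by omega)

def lookup (t : ℕ) (α ξ : List ℕ) (n : ℕ) : Option ℕ :=
  (List.range (ξ.length + 1)).foldl
    (fun acc l => acc <|> ((α[(Encodable.encode (t, takeL l ξ, n))]?).bind
      (fun e => (Encodable.decode (α := Option ℕ) e).bind id))) none

lemma opt_none_orElse {β : Type} (x : Option β) : (none <|> x) = x := rfl

lemma foldl_orElse_acc_some {f : ℕ → Option ℕ} {L : List ℕ} {v : ℕ} :
    L.foldl (fun acc l => acc <|> f l) (some v) = some v := by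
  induction L with
  | nil => rfl
  | cons a L ih => simpa using ih

lemma foldl_orElse_some {f : ℕ → Option ℕ} {L : List ℕ} {acc : Option ℕ} {v : ℕ}
    (h : L.foldl (fun acc l => acc <|> f l) acc = some v) :
    acc = some v ∨ ∃ l ∈ L, f l = some v := by
  induction L generalizing acc with
  | nil => exact Or.inl h
  | cons a L ih =>
    simp only [List.foldl_cons] at h
    rcases ih h with h' | ⟨l, hl, he⟩
    · cases hacc : acc with
      | some w => rw [hacc] at h'; simp at h'; left; rw [← h']
      | none =>
        rw [hacc] at h'
        simp only [opt_none_orElse] at h'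
        exact Or.inr ⟨a, List.mem_cons_self .., h'⟩
    · exact Or.inr ⟨l, List.mem_cons_of_mem _ hl, he⟩

lemma foldl_orElse_isSome {f : ℕ → Option ℕ} {L : List ℕ} {l : ℕ} (hl : l ∈ L) {v : ℕ}
    (hv : f l = some v) : ∃ w, L.foldl (fun acc l => acc <|> f l) none = some w := by
  induction L with
  | nil => cases hl
  | cons a L ih =>
    simp only [List.foldl_cons, opt_none_orElse]
    rcases List.mem_cons.1 hl with rfl | hl'
    · rw [hv]; exact ⟨v, foldl_orElse_acc_some⟩
    · cases hfa : f a with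
      | some w => exact ⟨w, foldl_orElse_acc_some⟩
      | none =>
        have := ih hl'
        simpa only [opt_none_orElse] using this

lemma lookup_sound {Fs : ℕ → Baire → Baire} {Ds : ℕ → Set Baire} {t s tl n v : ℕ} {u : Baire}
    (hu : u ∈ Ds t)
    (h : lookup t (initSeg (oracleA Fs Ds) s) (initSeg u tl) n = some v) :
    v = Fs t u n := by
  unfold lookup at h
  rcases foldl_orElse_some h with h' | ⟨l, hl, he⟩
  · cases h'
  · have hlt : l ≤ tl := by
      have := List.mem_range.mp hl
      rw [initSeg_length] at this; omega
    rw [takeL_initSeg hlt] at he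
    rcases Option.bind_eq_some_iff.1 he with ⟨e, he1, he2⟩
    have hea : e = oracleA Fs Ds (Encodable.encode (t, initSeg u l, n)) := initSeg_get?_eq he1
    rw [hea] at he2
    unfold oracleA at he2
    rw [Encodable.encodek] at he2
    simp only [Option.bind_some] at he2
    rw [Encodable.encodek] at he2
    simp only [Option.bind_some, id] at he2
    exact tOpt_sound he2 hu (by rw [initSeg_length])

lemma lookup_some {Fs : ℕ → Baire → Baire} {Ds : ℕ → Set Baire} {t : ℕ} {u : Baire}
    (hu : u ∈ Ds t) (pc : PrefCont (Fs t) (Ds t)) (n : ℕ) :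
    ∃ M, ∀ s tl, M ≤ s → M ≤ tl →
      lookup t (initSeg (oracleA Fs Ds) s) (initSeg u tl) n = some (Fs t u n) := by
  obtain ⟨m₀, hm₀⟩ := tOpt_some pc hu n
  set c₀ := Encodable.encode (t, initSeg u m₀, n) with hc₀
  refine ⟨max m₀ (c₀ + 1), fun s tl hs htl => ?_⟩
  have hm₀tl : m₀ ≤ tl := le_trans (le_max_left _ _) htl
  have hc₀s : c₀ < s := lt_of_lt_of_le (lt_of_lt_of_le (Nat.lt_succ_self _) (le_max_right m₀ _)) hs
  have hstep : ((initSeg (oracleA Fs Ds) s)[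
        (Encodable.encode (t, takeL m₀ (initSeg u tl), n))]?).bind
      (fun e => (Encodable.decode (α := Option ℕ) e).bind id) = some (Fs t u n) := by
    rw [takeL_initSeg hm₀tl, ← hc₀, initSeg_get?_of_lt hc₀s]
    show ((Encodable.decode (α := Option ℕ) (oracleA Fs Ds c₀)).bind id) = _
    unfold oracleA
    rw [Encodable.encodek]
    simp only [Option.bind_some, id]
    rw [hc₀, Encodable.encodek]
    simp only [Option.bind_some]
    exact hm₀ m₀ le_rfl
  have hmem : m₀ ∈ List.range ((initSeg u tl).length + 1) := by
    rw [initSeg_length]; exact List.mem_range.mpr (by omega)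
  obtain ⟨w, hw⟩ := foldl_orElse_isSome (f := fun l =>
    ((initSeg (oracleA Fs Ds) s)[(Encodable.encode (t, takeL l (initSeg u tl), n))]?).bind
      (fun e => (Encodable.decode (α := Option ℕ) e).bind id)) hmem hstep
  have hlk : lookup t (initSeg (oracleA Fs Ds) s) (initSeg u tl) n = some w := hw
  rw [hlk, lookup_sound hu hlk]

/-! #### List extraction functions and their computability -/

def evL (l : List ℕ) : List ℕ := (List.range ((l.length + 1) / 2)).map (fun i => l.getD (2 * i) 0)
def oddL (l : List ℕ) : List ℕ := (List.range (l.length / 2)).map (fun i => l.getD (2 * i + 1) 0)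
def pairL (u v : List ℕ) : List ℕ :=
  (List.range (2 * min u.length v.length)).map
    (fun i => if i % 2 = 0 then u.getD (i / 2) 0 else v.getD (i / 2) 0)

lemma evL_initSeg (z : Baire) (m : ℕ) : evL (initSeg z m) = initSeg (evens z) ((m + 1) / 2) := by
  unfold evL
  rw [initSeg_length]
  show _ = (List.range ((m + 1) / 2)).map (evens z)
  apply List.map_congr_left
  intro i hi
  have hi' : i < (m + 1) / 2 := List.mem_range.mp hi
  show (initSeg z m).getD (2 * i) 0 = z (2 * i)
  exact initSeg_getD z (by omega)

lemma oddL_initSeg (z : Baire) (m : ℕ) : oddL (initSeg z m) = initSeg (odds z) (m / 2) := by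
  unfold oddL
  rw [initSeg_length]
  show _ = (List.range (m / 2)).map (odds z)
  apply List.map_congr_left
  intro i hi
  have hi' : i < m / 2 := List.mem_range.mp hi
  show (initSeg z m).getD (2 * i + 1) 0 = z (2 * i + 1)
  exact initSeg_getD z (by omega)

lemma pairL_initSeg (x y : Baire) (s t : ℕ) :
    pairL (initSeg x s) (initSeg y t) = initSeg (pair x y) (2 * min s t) := by
  unfold pairL
  rw [initSeg_length, initSeg_length]
  show _ = (List.range (2 * min s t)).map (pair x y)
  apply List.map_congr_left
  intro i hi
  have hi' : i < 2 * min s t := List.mem_range.mp hi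
  show _ = pair x y i
  unfold pair
  by_cases h : i % 2 = 0 <;> simp only [h, if_true, if_false, reduceIte]
  · exact initSeg_getD x (by omega)
  · exact initSeg_getD y (by omega)

section PR
open Primrec

lemma primrec_evL : Primrec evL := by
  unfold evL
  exact list_map
    (list_range.comp (nat_div.comp (succ.comp list_length) (const 2)))
    ((list_getD 0).comp fst (nat_mul.comp (const 2) snd) |>.to₂)

lemma primrec_oddL : Primrec oddL := by
  unfold oddL
  exact list_map
    (list_range.comp (nat_div.comp list_length (const 2)))
    ((list_getD 0).comp fst (succ.comp (nat_mul.comp (const 2) snd)) |>.to₂)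

lemma primrec_pairL : Primrec₂ pairL := by
  unfold pairL
  have hc : PrimrecPred (fun q : (List ℕ × List ℕ) × ℕ => q.2 % 2 = 0) :=
    PrimrecRel.comp (Primrec.eq (α := ℕ)) (nat_mod.comp snd (const 2)) (const 0)
  have hf : Primrec (fun q : (List ℕ × List ℕ) × ℕ => q.1.1.getD (q.2 / 2) 0) :=
    (list_getD 0).comp (fst.comp fst) (nat_div.comp snd (const 2))
  have hg : Primrec (fun q : (List ℕ × List ℕ) × ℕ => q.1.2.getD (q.2 / 2) 0) :=
    (list_getD 0).comp (snd.comp fst) (nat_div.comp snd (const 2))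
  exact Primrec.list_map (α := List ℕ × List ℕ)
    (list_range.comp (nat_mul.comp (const 2)
      (nat_min.comp (list_length.comp fst) (list_length.comp snd))))
    (Primrec.to₂ (Primrec.ite hc hf hg))

lemma primrec_takeL : Primrec₂ takeL := by
  unfold takeL
  exact Primrec.list_map (α := ℕ × List ℕ) (list_range.comp fst)
    (Primrec.to₂ ((list_getD 0).comp (snd.comp fst) snd))

lemma primrec_lookup (t : ℕ) {A X : List ℕ → List ℕ} (hA : Primrec A) (hX : Primrec X) :
    Primrec₂ (fun τ n => lookup t (A τ) (X τ) n) := by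
  unfold lookup
  have hget : Primrec (fun w : (List ℕ × ℕ) × Option ℕ × ℕ =>
      (A w.1.1)[(Encodable.encode (t, takeL w.2.2 (X w.1.1), w.1.2))]?) :=
    list_getElem?.comp (hA.comp (fst.comp fst))
      (Primrec.encode.comp ((const t).pair
        ((primrec_takeL.comp (snd.comp snd) (hX.comp (fst.comp fst))).pair (snd.comp fst))))
  have hdec : Primrec₂ (fun (_ : (List ℕ × ℕ) × Option ℕ × ℕ) (e : ℕ) =>
      (Encodable.decode (α := Option ℕ) e).bind id) :=
    Primrec.to₂ (option_bind (Primrec.decode.comp snd) (Primrec.to₂ Primrec.snd))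
  have hh : Primrec₂ (fun (a : List ℕ × ℕ) (p : Option ℕ × ℕ) =>
      p.1 <|> ((A a.1)[(Encodable.encode (t, takeL p.2 (X a.1), a.2))]?).bind
        (fun e => (Encodable.decode (α := Option ℕ) e).bind id)) :=
    option_orElse.comp₂ (Primrec.to₂ (fst.comp snd)) (Primrec.to₂ (option_bind hget hdec))
  exact Primrec.to₂ (Primrec.list_foldl
    (list_range.comp (succ.comp (list_length.comp (hX.comp fst))))
    (const (Option.none : Option ℕ)) hh)

lemma computable_lookup (t : ℕ) {A X : List ℕ → List ℕ} (hA : Primrec A) (hX : Primrec X) :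
    Computable₂ (fun τ n => lookup t (A τ) (X τ) n) :=
  (primrec_lookup t hA hX).to_comp

lemma computable_lookup_h2 (t : ℕ) {A X : List ℕ → List ℕ} (hA : Primrec A) (hX : Primrec X) :
    Computable₂ (fun (τ : List ℕ) (n : ℕ) =>
      if n % 2 = 0 then τ[(2 * n)]? else lookup t (A τ) (X τ) (n / 2)) := by
  have hc : PrimrecPred (fun q : List ℕ × ℕ => q.2 % 2 = 0) :=
    PrimrecRel.comp (Primrec.eq (α := ℕ)) (nat_mod.comp snd (const 2)) (const 0)
  have hf : Primrec (fun q : List ℕ × ℕ => q.1[(2 * q.2)]?) :=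
    list_getElem?.comp fst (nat_mul.comp (const 2) snd)
  have hg : Primrec (fun q : List ℕ × ℕ => lookup t (A q.1) (X q.1) (q.2 / 2)) :=
    (primrec_lookup t hA hX).comp fst (nat_div.comp snd (const 2))
  exact (Primrec.ite hc hf hg).to_comp

end PR

end CCPAux

namespace CCPAux

/-- Key lemma: continuous reductions compose below any compositional-product bound. -/
lemma main2 {f g p : Problem} (f' g' : Problem)
    (hmax : ∀ f'' g'' : Problem, WRed f'' f → WRed g'' g → WRed (pcomp f'' g'') p)
    (H1 : ContWRed f' f) (H2 : ContWRed g' g) : ContWRed (pcomp f' g') p := by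
  classical
  obtain ⟨h1, k1, hk1, hh1, hc1⟩ := H1
  obtain ⟨h2, k2, hk2, hh2, hc2⟩ := H2
  replace hk1 := prefCont_of_continuousOn hk1
  replace hh1 := prefCont_of_continuousOn hh1
  replace hk2 := prefCont_of_continuousOn hk2
  replace hh2 := prefCont_of_continuousOn hh2
  set E1 : Set Baire := {q | ∃ x ∈ Dom f', ∃ y ∈ f (k1 x), q = pair x y} with hE1def
  set E2 : Set Baire := {q | ∃ x ∈ Dom g', ∃ y ∈ g (k2 x), q = pair x y} with hE2def
  set Fs : ℕ → Baire → Baire :=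
    fun t => if t = 0 then k1 else if t = 1 then h1 else if t = 2 then k2 else h2 with hFsdef
  set Ds : ℕ → Set Baire :=
    fun t => if t = 0 then Dom f' else if t = 1 then E1 else if t = 2 then Dom g' else E2
    with hDsdef
  set a : Baire := oracleA Fs Ds with hadef
  set F2 : Problem := fun z => {y | ∃ x, z = pair a x ∧ x ∈ Dom f' ∧ y ∈ f' x} with hF2def
  set G2 : Problem :=
    fun z => {w | ∃ x, z = pair a x ∧ x ∈ Dom g' ∧ ∃ v ∈ g' x, w = pair a v} with hG2def
  have hDomF2 : ∀ z, z ∈ Dom F2 ↔ ∃ x, z = pair a x ∧ x ∈ Dom f' := by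
    intro z
    constructor
    · rintro ⟨y, x, rfl, hx, hy⟩
      exact ⟨x, rfl, hx⟩
    · rintro ⟨x, rfl, hx⟩
      obtain ⟨y, hy⟩ := hx
      exact ⟨y, x, rfl, ⟨y, hy⟩, hy⟩
  have hDomG2 : ∀ z, z ∈ Dom G2 ↔ ∃ x, z = pair a x ∧ x ∈ Dom g' := by
    intro z
    constructor
    · rintro ⟨w, x, rfl, hx, _⟩
      exact ⟨x, rfl, hx⟩
    · rintro ⟨x, rfl, hx⟩
      obtain ⟨y, hy⟩ := hx
      exact ⟨pair a y, x, rfl, ⟨y, hy⟩, y, hy, rfl⟩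
  -- the reduction F2 ≤_W f, with computable functionals
  have hred1 : WRed F2 f := by
    refine ⟨fun q => h1 (pair (odds (evens q)) (odds q)), fun z => k1 (odds z), ?_, ?_, ?_⟩
    · -- ComputableOn of the forward functional
      refine ⟨fun τ n => lookup 0 (evL τ) (oddL τ) n,
        computable_lookup 0 primrec_evL primrec_oddL, ?_⟩
      intro z hz n
      obtain ⟨x, rfl, hx⟩ := (hDomF2 z).1 hz
      have hxD : x ∈ Ds 0 := hx
      have hpc0 : PrefCont (Fs 0) (Ds 0) := hk1
      constructor
      · obtain ⟨M, hM⟩ := lookup_some (Fs := Fs) (Ds := Ds) (t := 0) hxD hpc0 n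
        refine ⟨2 * M + 2, ?_⟩
        simp only [evL_initSeg, oddL_initSeg, evens_pair, odds_pair]
        rw [hadef, hM ((2 * M + 2 + 1) / 2) ((2 * M + 2) / 2) (by omega) (by omega)]
        rfl
      · intro m v hv
        simp only [evL_initSeg, oddL_initSeg, evens_pair, odds_pair] at hv
        rw [hadef] at hv
        have := lookup_sound (t := 0) hxD hv
        simpa [odds_pair, hFsdef] using this
    · -- ComputableOn of the backward functional
      refine ⟨fun τ n => lookup 1 (evL (evL τ)) (pairL (oddL (evL τ)) (oddL τ)) n,
        computable_lookup 1 (primrec_evL.comp primrec_evL)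
          (primrec_pairL.comp (primrec_oddL.comp primrec_evL) primrec_oddL), ?_⟩
      rintro q ⟨z, hz, y, hy, rfl⟩ n
      obtain ⟨x, rfl, hx⟩ := (hDomF2 z).1 hz
      have hy' : y ∈ f (k1 x) := by simpa [odds_pair] using hy
      have hu : pair x y ∈ Ds 1 := ⟨x, hx, y, hy', rfl⟩
      have hpc1 : PrefCont (Fs 1) (Ds 1) := hh1
      constructor
      · obtain ⟨M, hM⟩ := lookup_some (Fs := Fs) (Ds := Ds) (t := 1) hu hpc1 n
        refine ⟨8 * M + 8, ?_⟩
        simp only [evL_initSeg, oddL_initSeg, evens_pair, odds_pair, pairL_initSeg]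
        rw [hadef, hM (((8 * M + 8 + 1) / 2 + 1) / 2)
          (2 * min ((8 * M + 8 + 1) / 2 / 2) ((8 * M + 8) / 2)) (by omega) (by omega)]
        rfl
      · intro m v hv
        simp only [evL_initSeg, oddL_initSeg, evens_pair, odds_pair, pairL_initSeg] at hv
        rw [hadef] at hv
        have := lookup_sound (t := 1) hu hv
        simpa [evens_pair, odds_pair, hFsdef] using this
    · -- correctness of the reduction
      intro z hz
      obtain ⟨x, rfl, hx⟩ := (hDomF2 z).1 hz
      constructor
      · show k1 (odds (pair a x)) ∈ Dom f
        rw [odds_pair]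
        exact (hc1 x hx).1
      · intro y hy
        have hy' : y ∈ f (k1 x) := by simpa [odds_pair] using hy
        show h1 (pair (odds (evens (pair (pair a x) y))) (odds (pair (pair a x) y)))
          ∈ F2 (pair a x)
        rw [evens_pair, odds_pair, odds_pair]
        exact ⟨x, rfl, hx, (hc1 x hx).2 y hy'⟩
  -- the reduction G2 ≤_W g, with computable functionals
  have hred2 : WRed G2 g := by
    refine ⟨fun q => pair (evens (evens q)) (h2 (pair (odds (evens q)) (odds q))),
      fun z => k2 (odds z), ?_, ?_, ?_⟩
    · refine ⟨fun τ n => lookup 2 (evL τ) (oddL τ) n,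
        computable_lookup 2 primrec_evL primrec_oddL, ?_⟩
      intro z hz n
      obtain ⟨x, rfl, hx⟩ := (hDomG2 z).1 hz
      have hxD : x ∈ Ds 2 := hx
      have hpc2 : PrefCont (Fs 2) (Ds 2) := hk2
      constructor
      · obtain ⟨M, hM⟩ := lookup_some (Fs := Fs) (Ds := Ds) (t := 2) hxD hpc2 n
        refine ⟨2 * M + 2, ?_⟩
        simp only [evL_initSeg, oddL_initSeg, evens_pair, odds_pair]
        rw [hadef, hM ((2 * M + 2 + 1) / 2) ((2 * M + 2) / 2) (by omega) (by omega)]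
        rfl
      · intro m v hv
        simp only [evL_initSeg, oddL_initSeg, evens_pair, odds_pair] at hv
        rw [hadef] at hv
        have := lookup_sound (t := 2) hxD hv
        simpa [odds_pair, hFsdef] using this
    · refine ⟨fun τ n => if n % 2 = 0 then τ[(2 * n)]?
          else lookup 3 (evL (evL τ)) (pairL (oddL (evL τ)) (oddL τ)) (n / 2),
        computable_lookup_h2 3 (primrec_evL.comp primrec_evL)
          (primrec_pairL.comp (primrec_oddL.comp primrec_evL) primrec_oddL), ?_⟩
      rintro q ⟨z, hz, y, hy, rfl⟩ n
      obtain ⟨x, rfl, hx⟩ := (hDomG2 z).1 hz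
      have hy' : y ∈ g (k2 x) := by simpa [odds_pair] using hy
      have hu : pair x y ∈ Ds 3 := ⟨x, hx, y, hy', rfl⟩
      have hpc3 : PrefCont (Fs 3) (Ds 3) := hh2
      by_cases hn : n % 2 = 0
      · have htar : pair (evens (evens (pair (pair a x) y)))
            (h2 (pair (odds (evens (pair (pair a x) y))) (odds (pair (pair a x) y)))) n
            = a (n / 2) := by
          rw [evens_pair, evens_pair]
          show (if n % 2 = 0 then a (n / 2) else _) = a (n / 2)
          rw [if_pos hn]
        constructor
        · refine ⟨2 * n + 1, ?_⟩
          simp only [hn, if_true, reduceIte, htar]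
          rw [initSeg_get?_of_lt (by omega), pair_even]
          have : pair a x n = a (n / 2) := by
            show (if n % 2 = 0 then a (n / 2) else _) = a (n / 2)
            rw [if_pos hn]
          rw [this]
        · intro m v hv
          simp only [hn, if_true, reduceIte] at hv
          have hv' := initSeg_get?_eq hv
          show v = pair (evens (evens (pair (pair a x) y)))
            (h2 (pair (odds (evens (pair (pair a x) y))) (odds (pair (pair a x) y)))) n
          rw [htar, hv', pair_even]
          show (if n % 2 = 0 then a (n / 2) else _) = a (n / 2)
          rw [if_pos hn]
      · have htar : pair (evens (evens (pair (pair a x) y)))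
            (h2 (pair (odds (evens (pair (pair a x) y))) (odds (pair (pair a x) y)))) n
            = h2 (pair x y) (n / 2) := by
          rw [evens_pair, evens_pair, odds_pair, odds_pair]
          show (if n % 2 = 0 then _ else h2 (pair x y) (n / 2)) = h2 (pair x y) (n / 2)
          rw [if_neg hn]
        constructor
        · obtain ⟨M, hM⟩ := lookup_some (Fs := Fs) (Ds := Ds) (t := 3) hu hpc3 (n / 2)
          refine ⟨8 * M + 8, ?_⟩
          simp only [hn, if_false, reduceIte, htar, evL_initSeg, oddL_initSeg, evens_pair,
            odds_pair, pairL_initSeg]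
          rw [hadef, hM (((8 * M + 8 + 1) / 2 + 1) / 2)
            (2 * min ((8 * M + 8 + 1) / 2 / 2) ((8 * M + 8) / 2)) (by omega) (by omega)]
          have hpr : pair (oracleA Fs Ds) (h2 (pair x y)) n = h2 (pair x y) (n / 2) := by
            show (if n % 2 = 0 then _ else h2 (pair x y) (n / 2)) = _
            rw [if_neg hn]
          rw [hpr]
          rfl
        · intro m v hv
          simp only [hn, if_false, reduceIte, evL_initSeg, oddL_initSeg, evens_pair,
            odds_pair, pairL_initSeg] at hv
          rw [hadef] at hv
          have := lookup_sound (t := 3) hu hv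
          show v = pair (evens (evens (pair (pair a x) y)))
            (h2 (pair (odds (evens (pair (pair a x) y))) (odds (pair (pair a x) y)))) n
          rw [htar]
          exact this
    · intro z hz
      obtain ⟨x, rfl, hx⟩ := (hDomG2 z).1 hz
      constructor
      · show k2 (odds (pair a x)) ∈ Dom g
        rw [odds_pair]
        exact (hc2 x hx).1
      · intro y hy
        have hy' : y ∈ g (k2 x) := by simpa [odds_pair] using hy
        show pair (evens (evens (pair (pair a x) y)))
            (h2 (pair (odds (evens (pair (pair a x) y))) (odds (pair (pair a x) y))))
          ∈ G2 (pair a x)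
        rw [evens_pair, evens_pair, odds_pair, odds_pair]
        exact ⟨x, rfl, hx, h2 (pair x y), (hc2 x hx).2 y hy', rfl⟩
  -- the composed problem computes the continuous composition
  have hset : ∀ x, x ∈ Dom (pcomp f' g') → (pcomp F2 G2) (pair a x) = (pcomp f' g') x := by
    intro x hx
    obtain ⟨u0, hsub, y0, hy0, hu0⟩ := hx
    ext u
    constructor
    · rintro ⟨_, w, hw, hu⟩
      obtain ⟨x₀, hxeq, hx₀, v, hv, rfl⟩ := hw
      obtain ⟨x₁, hxeq1, hx₁, hu1⟩ := hu
      have e0 : x = x₀ := pair_inj_right hxeq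
      have e1 : v = x₁ := pair_inj_right hxeq1
      refine ⟨hsub, v, ?_, ?_⟩
      · rw [e0]; exact hv
      · rw [e1]; exact hu1
    · rintro ⟨hsub', v, hv, hu⟩
      refine ⟨?_, pair a v, ⟨x, rfl, ⟨v, hv⟩, v, hv, rfl⟩, ⟨v, rfl, hsub' hv, hu⟩⟩
      rintro w ⟨x₀, hxeq, hx₀, v', hv', rfl⟩
      have e0 : x = x₀ := pair_inj_right hxeq
      rw [hDomF2]
      refine ⟨v', rfl, hsub' ?_⟩
      rw [e0]; exact hv'
  have hax : ∀ x ∈ Dom (pcomp f' g'), pair a x ∈ Dom (pcomp F2 G2) := by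
    intro x hx
    show ((pcomp F2 G2) (pair a x)).Nonempty
    rw [hset x hx]
    exact hx
  -- use maximality and glue
  obtain ⟨H, K, hK, hH, hC⟩ := hmax F2 G2 hred1 hred2
  replace hK := prefCont_of_computableOn hK
  replace hH := prefCont_of_computableOn hH
  refine ⟨fun q => H (pair (pair a (evens q)) (odds q)), fun x => K (pair a x), ?_, ?_, ?_⟩
  · -- continuity of the forward functional
    apply continuousOn_of_prefCont
    intro x hx n
    obtain ⟨m, hm⟩ := hK (pair a x) (hax x hx) n
    refine ⟨m, fun x' hx' he => ?_⟩
    exact hm (pair a x') (hax x' hx') (initSeg_pair_congr rfl he)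
  · -- continuity of the backward functional
    apply continuousOn_of_prefCont
    rintro q ⟨x, hx, y, hy, rfl⟩ n
    have hr : pair (pair a x) y ∈
        {r | ∃ z ∈ Dom (pcomp F2 G2), ∃ y ∈ p (K z), r = pair z y} :=
      ⟨pair a x, hax x hx, y, hy, rfl⟩
    obtain ⟨m, hm⟩ := hH (pair (pair a x) y) hr n
    refine ⟨2 * m, ?_⟩
    rintro q' ⟨x', hx', y', hy', rfl⟩ he
    obtain ⟨hex, hey⟩ := initSeg_pair_split he
    show H (pair (pair a (evens (pair x' y'))) (odds (pair x' y'))) n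
      = H (pair (pair a (evens (pair x y))) (odds (pair x y))) n
    rw [evens_pair, odds_pair, evens_pair, odds_pair]
    exact hm (pair (pair a x') y') ⟨pair a x', hax x' hx', y', hy', rfl⟩
      (initSeg_pair_congr (initSeg_pair_congr rfl hex) hey)
  · -- correctness
    intro x hx
    refine ⟨(hC (pair a x) (hax x hx)).1, fun y hy => ?_⟩
    have := (hC (pair a x) (hax x hx)).2 y hy
    rw [hset x hx] at this
    show H (pair (pair a (evens (pair x y))) (odds (pair x y))) ∈ (pcomp f' g') x
    rw [evens_pair, odds_pair]
    exact this

end CCPAux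

/-- The maximum, with respect to continuous Weihrauch reducibility, of
`{f' ∘ g' : f' ≤*_W f, g' ≤*_W g}` exists and is continuously Weihrauch equivalent
to the compositional product `f * g`: any representative `p` of `f * g` is
`≡*_W`-equivalent to a member of this set and `≤*_W`-bounds the whole set. -/
theorem contCompProd_eq_compProd (f g p : Problem) (hp : IsCompProd f g p) :
    (∃ f' g' : Problem, ContWRed f' f ∧ ContWRed g' g ∧ ContWEquiv (pcomp f' g') p) ∧
    (∀ f' g' : Problem, ContWRed f' f → ContWRed g' g → ContWRed (pcomp f' g') p) := by
  obtain ⟨⟨f0, g0, hf0, hg0, hpe⟩, hmax⟩ := hp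
  refine ⟨⟨f0, g0, CCPAux.contWRed_of_wRed hf0, CCPAux.contWRed_of_wRed hg0,
    CCPAux.contWRed_of_wRed hpe.2, CCPAux.contWRed_of_wRed hpe.1⟩,
    fun f' g' H1 H2 => CCPAux.main2 f' g' hmax H1 H2⟩
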